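/- Let T be a time scale, a, b ∈ T with a < b, and g : [a,b) → ℂ with g ∈ L¹([a,b); μ_σ) satisfying g(s) = g(ρ(s)) for s ∉ T. If t ∈ (a,b) ∩ T is a dense point (σ(t) = t = ρ(t)) at which the Lebesgue point property lim_{ε↓0} (1/ε) ∫_{t−ε}^{t+ε} |g(s) − g(t)| ds = 0 holds, then the function f(x) = ∫_{[a,x)} g dμ_σ (x ∈ T ∩ [a,b]) is delta differentiable at t with f^Δ(t) = g(t). -/

import Mathlib

open Set MeasureTheory Filter Topology Function

open Classical in
noncomputable def fwd (T : Set ℝ) (t : ℝ) : ℝ :=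
  if {s | s ∈ T ∧ t < s}.Nonempty then sInf {s | s ∈ T ∧ t < s} else sSup T

open Classical in
noncomputable def bwd (T : Set ℝ) (t : ℝ) : ℝ :=
  if {s | s ∈ T ∧ s < t}.Nonempty then sSup {s | s ∈ T ∧ s < t} else sInf T

/-- `f` has Hilger (delta) derivative `L` at the point `t` of the time scale `T`. -/
def HasDeltaDerivAt (T : Set ℝ) (f : ℝ → ℂ) (t : ℝ) (L : ℂ) : Prop :=
  ∀ ε > (0:ℝ), ∃ U ∈ nhdsWithin t T, ∀ s ∈ U,
    ‖f (fwd T t) - f s - L * ((fwd T t : ℂ) - (s : ℂ))‖ ≤ ε * |fwd T t - s|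

section Helpers

variable {T : Set ℝ}

lemma fwd_le {x v : ℝ} (hv : v ∈ T) (hxv : x < v) : fwd T x ≤ v := by
  rw [fwd, if_pos ⟨v, hv, hxv⟩]
  exact csInf_le ⟨x, fun s hs => hs.2.le⟩ ⟨hv, hxv⟩

lemma le_fwd {x v : ℝ} (hv : v ∈ T) (hxv : x < v) : x ≤ fwd T x := by
  rw [fwd, if_pos ⟨v, hv, hxv⟩]
  exact le_csInf ⟨v, hv, hxv⟩ (fun s hs => hs.2.le)

lemma fwd_mem (hcl : IsClosed T) {x v : ℝ} (hv : v ∈ T) (hxv : x < v) : fwd T x ∈ T := by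
  rw [fwd, if_pos ⟨v, hv, hxv⟩]
  have : sInf {s | s ∈ T ∧ x < s} ∈ closure {s | s ∈ T ∧ x < s} :=
    csInf_mem_closure ⟨v, hv, hxv⟩ ⟨x, fun s hs => hs.2.le⟩
  have h2 : closure {s | s ∈ T ∧ x < s} ⊆ T := by
    refine (closure_mono (fun s hs => hs.1)).trans ?_
    rw [hcl.closure_eq]
  exact h2 this

lemma le_bwd {x v : ℝ} (hv : v ∈ T) (hvx : v < x) : v ≤ bwd T x := by
  rw [bwd, if_pos ⟨v, hv, hvx⟩]
  exact le_csSup ⟨x, fun s hs => hs.2.le⟩ ⟨hv, hvx⟩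

lemma bwd_le {x : ℝ} (h : ∃ p ∈ T, p ≤ x) : bwd T x ≤ x := by
  obtain ⟨p, hp, hpx⟩ := h
  rw [bwd]
  split_ifs with hne
  · exact csSup_le hne (fun s hs => hs.2.le)
  · have hpe : p = x := by
      rcases eq_or_lt_of_le hpx with h | h
      · exact h
      · exact absurd ⟨hp, h⟩ (fun hmem => hne ⟨p, hmem⟩)
    have hbdd : BddBelow T := ⟨x, fun s hs => by
      by_contra hlt
      exact hne ⟨s, hs, lt_of_not_ge hlt⟩⟩
    exact (csInf_le hbdd hp).trans hpx

lemma bwd_mem (hne : T.Nonempty) (hcl : IsClosed T) (x : ℝ) : bwd T x ∈ T := by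
  rw [bwd]
  split_ifs with h
  · have : sSup {s | s ∈ T ∧ s < x} ∈ closure {s | s ∈ T ∧ s < x} :=
      csSup_mem_closure h ⟨x, fun s hs => hs.2.le⟩
    have h2 : closure {s | s ∈ T ∧ s < x} ⊆ T := by
      refine (closure_mono (fun s hs => hs.1)).trans ?_
      rw [hcl.closure_eq]
    exact h2 this
  · have hbdd : BddBelow T := ⟨x, fun s hs => by
      by_contra hlt
      exact h ⟨s, hs, lt_of_not_ge hlt⟩⟩
    exact hcl.csInf_mem hne hbdd

lemma bwd_mono : Monotone (bwd T) := by
  intro x y hxy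
  rw [bwd, bwd]
  split_ifs with h1 h2 h2
  · have hb : BddAbove {s | s ∈ T ∧ s < y} := ⟨y, fun s hs => hs.2.le⟩
    exact csSup_le_csSup hb h1 (fun s hs => ⟨hs.1, hs.2.trans_le hxy⟩)
  · obtain ⟨v, hv⟩ := h1
    exact absurd ⟨v, hv.1, hv.2.trans_le hxy⟩ h2
  · obtain ⟨v, hv, hvy⟩ := h2
    have hbdd : BddBelow T := ⟨x, fun s hs => by
      by_contra hlt
      exact h1 ⟨s, hs, lt_of_not_ge hlt⟩⟩
    exact (csInf_le hbdd hv).trans (le_csSup ⟨y, fun s hs => hs.2.le⟩ ⟨hv, hvy⟩)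
  · exact le_rfl

lemma bwd_measurable : Measurable (bwd T) := bwd_mono.measurable

end Helpers

section Stieltjes

variable {T : Set ℝ} {F : StieltjesFunction ℝ}

lemma leftLim_eq_self (hF : ∀ t, F t = fwd T t) (hcl : IsClosed T) {p : ℝ} (hp : p ∈ T) :
    Function.leftLim F p = p := by
  have hmono : Monotone F := F.mono
  apply le_antisymm
  · refine le_of_tendsto (hmono.tendsto_leftLim p) ?_
    filter_upwards [self_mem_nhdsWithin] with u hu
    rw [hF u]
    exact fwd_le hp hu
  · refine le_of_forall_sub_le (fun ε hε => ?_)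
    by_cases hex : (T ∩ Ioo (p - ε) p).Nonempty
    · obtain ⟨v, hvT, hv1, hv2⟩ := hex
      have h1 : F v ≤ Function.leftLim F p := hmono.le_leftLim hv2
      have h2 : v ≤ F v := by rw [hF v]; exact le_fwd hp hv2
      linarith
    · set u := p - ε / 2 with hu
      have hu1 : p - ε < u := by rw [hu]; linarith
      have hu2 : u < p := by rw [hu]; linarith
      have h1 : F u ≤ Function.leftLim F p := hmono.le_leftLim hu2
      have h2 : p ≤ F u := by
        rw [hF u, fwd, if_pos ⟨p, hp, hu2⟩]
        refine le_csInf ⟨p, hp, hu2⟩ (fun v hv => ?_)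
        by_contra hlt
        push_neg at hlt
        exact hex ⟨v, hv.1, ⟨hu1.trans hv.2, hlt⟩⟩
      linarith

lemma measure_restrict_eq_map (hF : ∀ t, F t = fwd T t) (hne : T.Nonempty) (hcl : IsClosed T)
    {p q : ℝ} (hp : p ∈ T) (hq : q ∈ T) (hpq : p ≤ q) :
    F.measure.restrict (Ico p q) = Measure.map (bwd T) (volume.restrict (Ico p q)) := by
  have hfin : IsFiniteMeasure (F.measure.restrict (Ico p q)) := by
    constructor
    rw [Measure.restrict_apply_univ, F.measure_Ico,
      leftLim_eq_self hF hcl hp, leftLim_eq_self hF hcl hq]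
    exact ENNReal.ofReal_lt_top
  refine Measure.ext_of_Iic _ _ (fun x => ?_)
  rw [Measure.restrict_apply measurableSet_Iic,
    Measure.map_apply bwd_measurable measurableSet_Iic,
    Measure.restrict_apply (bwd_measurable measurableSet_Iic)]
  rcases lt_or_ge x p with hxp | hpx
  · -- both zero
    have h1 : Iic x ∩ Ico p q = ∅ := by
      ext w
      simp only [mem_inter_iff, mem_Iic, mem_Ico, mem_empty_iff_false, iff_false]
      rintro ⟨h1, h2, h3⟩
      linarith
    have h2 : bwd T ⁻¹' Iic x ∩ Ico p q ⊆ {p} := by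
      rintro w ⟨hw1, hw2, hw3⟩
      simp only [mem_preimage, mem_Iic] at hw1
      simp only [mem_singleton_iff]
      by_contra hne'
      have hpw : p < w := lt_of_le_of_ne hw2 (Ne.symm hne')
      have := le_bwd hp hpw
      linarith
    rw [h1, measure_empty]
    exact (le_antisymm ((measure_mono h2).trans_eq Real.volume_singleton) (zero_le)).symm
  rcases le_or_gt q x with hqx | hxq
  · -- full set
    have h1 : Iic x ∩ Ico p q = Ico p q := by
      apply inter_eq_self_of_subset_right
      intro w hw
      exact le_trans (le_of_lt hw.2) hqx
    have h2 : bwd T ⁻¹' Iic x ∩ Ico p q = Ico p q := by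
      apply inter_eq_self_of_subset_right
      intro w hw
      simp only [mem_preimage, mem_Iic]
      exact (bwd_le ⟨p, hp, hw.1⟩).trans (hw.2.le.trans hqx)
    rw [h1, h2, F.measure_Ico, leftLim_eq_self hF hcl hp, leftLim_eq_self hF hcl hq,
      Real.volume_Ico]
  · -- middle case: p ≤ x < q
    have hfx_mem : fwd T x ∈ T := fwd_mem hcl hq hxq
    have hfx_le : fwd T x ≤ q := fwd_le hq hxq
    have hfx_ge : x ≤ fwd T x := le_fwd hq hxq
    have h1 : Iic x ∩ Ico p q = Icc p x := by
      ext w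
      simp only [mem_inter_iff, mem_Iic, mem_Ico, mem_Icc]
      constructor
      · rintro ⟨h1, h2, h3⟩; exact ⟨h2, h1⟩
      · rintro ⟨h1, h2⟩; exact ⟨h2, h1, lt_of_le_of_lt h2 hxq⟩
    have hsub1 : Ico p (fwd T x) ⊆ bwd T ⁻¹' Iic x ∩ Ico p q := by
      rintro w ⟨hw1, hw2⟩
      refine ⟨?_, hw1, hw2.trans_le hfx_le⟩
      simp only [mem_preimage, mem_Iic]
      rw [bwd]
      split_ifs with hne'
      · refine csSup_le hne' (fun v hv => ?_)
        by_contra hlt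
        push_neg at hlt
        exact absurd (hv.2.trans hw2) (not_lt.mpr (fwd_le hv.1 hlt))
      · have hbdd : BddBelow T := ⟨w, fun s hs => by
          by_contra hlt
          exact hne' ⟨s, hs, lt_of_not_ge hlt⟩⟩
        exact (csInf_le hbdd hp).trans hpx
    have hsub2 : bwd T ⁻¹' Iic x ∩ Ico p q ⊆ Icc p (fwd T x) := by
      rintro w ⟨hw1, hw2, hw3⟩
      simp only [mem_preimage, mem_Iic] at hw1
      refine ⟨hw2, ?_⟩
      by_contra hlt
      push_neg at hlt
      rcases lt_or_eq_of_le hfx_ge with hgt | heq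
      · have := le_bwd hfx_mem hlt
        linarith
      · -- fwd T x = x; inf property gives a point of T in (x, w)
        have hne2 : {s | s ∈ T ∧ x < s}.Nonempty := ⟨q, hq, hxq⟩
        have hinf : sInf {s | s ∈ T ∧ x < s} < w := by
          have heq2 : fwd T x = sInf {s | s ∈ T ∧ x < s} := by
            rw [fwd, if_pos hne2]
          rw [← heq2]; exact hlt
        obtain ⟨v, hv, hvw⟩ := exists_lt_of_csInf_lt hne2 hinf
        have := le_bwd hv.1 hvw
        have := hv.2
        linarith
    rw [h1, F.measure_Icc, leftLim_eq_self hF hcl hp, hF x]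
    apply le_antisymm
    · calc ENNReal.ofReal (fwd T x - p) = volume (Ico p (fwd T x)) := Real.volume_Ico.symm
        _ ≤ volume (bwd T ⁻¹' Iic x ∩ Ico p q) := measure_mono hsub1
    · calc volume (bwd T ⁻¹' Iic x ∩ Ico p q) ≤ volume (Icc p (fwd T x)) :=
            measure_mono hsub2
        _ = ENNReal.ofReal (fwd T x - p) := Real.volume_Icc

end Stieltjes

section Transfer

variable {T : Set ℝ} {F : StieltjesFunction ℝ}

lemma countable_bad (hF : ∀ t, F t = fwd T t) (hne : T.Nonempty) (hcl : IsClosed T) :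
    {w | w ∈ T ∧ bwd T w ≠ w}.Countable := by
  have hD : {x | ¬ContinuousAt F x}.Countable := F.mono.countable_not_continuousAt
  have hsub : {w | w ∈ T ∧ bwd T w ≠ w} ⊆ fwd T '' {x | ¬ContinuousAt F x} := by
    rintro w ⟨hwT, hwne⟩
    have hlt : bwd T w < w := lt_of_le_of_ne (bwd_le ⟨w, hwT, le_rfl⟩) hwne
    have hfwd : fwd T (bwd T w) = w := by
      apply le_antisymm (fwd_le hwT hlt)
      rw [fwd, if_pos ⟨w, hwT, hlt⟩]
      refine le_csInf ⟨w, hwT, hlt⟩ (fun v hv => ?_)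
      by_contra hvw
      push_neg at hvw
      exact absurd (le_bwd hv.1 hvw) (not_le.mpr hv.2)
    refine ⟨bwd T w, ?_, hfwd⟩
    intro hcont
    have h1 : Function.leftLim F (bwd T w) = F (bwd T w) :=
      leftLim_eq_of_tendsto
        (hcont.tendsto.mono_left nhdsWithin_le_nhds)
    have h2 : Function.leftLim F (bwd T w) = bwd T w :=
      leftLim_eq_self hF hcl (bwd_mem hne hcl w)
    have h3 : F (bwd T w) = w := by rw [hF, hfwd]
    rw [h2, h3] at h1
    exact absurd h1 hlt.ne
  exact (hD.image _).mono hsub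

lemma ae_comp_eq (hF : ∀ t, F t = fwd T t) (hne : T.Nonempty) (hcl : IsClosed T)
    {g : ℝ → ℂ} (hcomp : ∀ s, s ∉ T → g s = g (bwd T s)) :
    ∀ᵐ w ∂(volume : Measure ℝ), g (bwd T w) = g w := by
  have hsub : {w | ¬ g (bwd T w) = g w} ⊆ {w | w ∈ T ∧ bwd T w ≠ w} := by
    intro w hw
    by_cases hwT : w ∈ T
    · refine ⟨hwT, fun heq => hw ?_⟩
      rw [heq]
    · exact absurd (hcomp w hwT).symm hw
  have h0 : (volume : Measure ℝ) {w | w ∈ T ∧ bwd T w ≠ w} = 0 :=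
    (countable_bad hF hne hcl).measure_zero _
  exact ae_iff.mpr (measure_mono_null hsub h0)

lemma integral_transfer (hF : ∀ t, F t = fwd T t) (hne : T.Nonempty) (hcl : IsClosed T)
    {g : ℝ → ℂ} (hcomp : ∀ s, s ∉ T → g s = g (bwd T s))
    {p q : ℝ} (hp : p ∈ T) (hq : q ∈ T) (hpq : p ≤ q)
    (hint : IntegrableOn g (Ico p q) F.measure) :
    IntegrableOn g (Ico p q) volume ∧
      ∫ w in Ico p q, g w ∂F.measure = ∫ w in Ico p q, g w := by
  have hM := measure_restrict_eq_map hF hne hcl hp hq hpq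
  have hae : (fun w => g (bwd T w)) =ᵐ[volume.restrict (Ico p q)] g :=
    ae_restrict_of_ae (ae_comp_eq hF hne hcl hcomp)
  have hsm : AEStronglyMeasurable g (Measure.map (bwd T) (volume.restrict (Ico p q))) := by
    rw [← hM]; exact hint.aestronglyMeasurable
  have hint2 : Integrable (fun w => g (bwd T w)) (volume.restrict (Ico p q)) := by
    have := (integrable_map_measure hsm bwd_measurable.aemeasurable).mp (by rwa [← hM])
    exact this
  have hint3 : Integrable g (volume.restrict (Ico p q)) := hint2.congr hae
  refine ⟨hint3, ?_⟩
  rw [show F.measure.restrict (Ico p q) = Measure.map (bwd T) (volume.restrict (Ico p q))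
      from hM,
    integral_map bwd_measurable.aemeasurable hsm]
  exact integral_congr_ae hae

end Transfer

theorem deltaDeriv_at_dense_lebesgue_point
    (T : Set ℝ) (hne : T.Nonempty) (hcl : IsClosed T)
    (F : StieltjesFunction ℝ) (hF : ∀ t, F t = fwd T t)
    (a b : ℝ) (ha : a ∈ T) (hb : b ∈ T) (hab : a < b)
    (g : ℝ → ℂ) (hg : IntegrableOn g (Ico a b) F.measure)
    (hcomp : ∀ s, s ∉ T → g s = g (bwd T s))
    (t : ℝ) (ht : t ∈ Ioo a b) (htT : t ∈ T)
    (hrd : fwd T t = t) (hld : bwd T t = t)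
    (hleb : Tendsto (fun ε : ℝ => ε⁻¹ * ∫ s in Icc (t - ε) (t + ε), ‖g s - g t‖)
      (𝓝[>] (0:ℝ)) (𝓝 0)) :
    HasDeltaDerivAt T (fun x => ∫ s in Ico a x, g s ∂F.measure) t (g t) := by
  obtain ⟨hta, htb⟩ := ht
  -- Lebesgue integrability of g on [a, b)
  have hgL : IntegrableOn g (Ico a b) volume :=
    (integral_transfer hF hne hcl hcomp ha hb hab.le hg).1
  -- key estimate
  have key : ∀ u v : ℝ, u ∈ T → v ∈ T → a ≤ u → v ≤ b → u ≤ v →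
      ‖(∫ w in Ico u v, g w ∂F.measure) - ((v : ℂ) - (u : ℂ)) * g t‖
        ≤ ∫ w in Ico u v, ‖g w - g t‖ := by
    intro u v hu hv hau hvb huv
    obtain ⟨hint, heq⟩ := integral_transfer hF hne hcl hcomp hu hv huv
      (hg.mono_set (Ico_subset_Ico hau hvb))
    rw [heq]
    have hconst : IntegrableOn (fun _ : ℝ => g t) (Ico u v) volume := by
      exact integrableOn_const (by rw [Real.volume_Ico]; exact ENNReal.ofReal_ne_top)
    have hconst_int : ∫ _ in Ico u v, g t = ((v : ℂ) - (u : ℂ)) * g t := by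
      rw [setIntegral_const, Real.volume_real_Ico_of_le huv]
      rw [Complex.real_smul]
      push_cast
      ring
    calc ‖(∫ w in Ico u v, g w) - ((v : ℂ) - (u : ℂ)) * g t‖
        = ‖∫ w in Ico u v, (g w - g t)‖ := by
          rw [integral_sub hint hconst, hconst_int]
      _ ≤ ∫ w in Ico u v, ‖g w - g t‖ := norm_integral_le_integral_norm _
  intro ε hε
  -- extract δ₁ from the Lebesgue point hypothesis
  have hmem : (fun r : ℝ => r⁻¹ * ∫ s in Icc (t - r) (t + r), ‖g s - g t‖) ⁻¹' Iio ε
      ∈ 𝓝[>] (0:ℝ) := hleb (Iio_mem_nhds hε)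
  rw [Metric.mem_nhdsWithin_iff] at hmem
  obtain ⟨δ₁, hδ₁, hball⟩ := hmem
  set δ : ℝ := min δ₁ (min (t - a) (b - t)) with hδdef
  have hδpos : 0 < δ := lt_min hδ₁ (lt_min (by linarith) (by linarith))
  have hδ1 : δ ≤ δ₁ := min_le_left _ _
  have hδa : δ ≤ t - a := (min_le_right _ _).trans (min_le_left _ _)
  have hδb : δ ≤ b - t := (min_le_right _ _).trans (min_le_right _ _)
  -- the bound from the Lebesgue point property
  have hIbound : ∀ r : ℝ, 0 < r → r < δ →
      ∫ w in Icc (t - r) (t + r), ‖g w - g t‖ ≤ ε * r := by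
    intro r hr hrδ
    have hmem : r ∈ Metric.ball (0:ℝ) δ₁ ∩ Ioi 0 := by
      constructor
      · rw [Metric.mem_ball, Real.dist_eq, sub_zero, abs_of_pos hr]
        exact hrδ.trans_le hδ1
      · exact hr
    have hlt := hball hmem
    simp only [mem_preimage, mem_Iio] at hlt
    have : (∫ w in Icc (t - r) (t + r), ‖g w - g t‖)
        = r * (r⁻¹ * ∫ w in Icc (t - r) (t + r), ‖g w - g t‖) := by
      field_simp
    rw [this]
    calc r * (r⁻¹ * ∫ w in Icc (t - r) (t + r), ‖g w - g t‖)
        ≤ r * ε := by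
          apply mul_le_mul_of_nonneg_left hlt.le hr.le
      _ = ε * r := mul_comm _ _
  -- monotone bound for the Lebesgue integral of the norm
  have hnormint : ∀ r : ℝ, 0 < r → r < δ →
      IntegrableOn (fun w => ‖g w - g t‖) (Icc (t - r) (t + r)) volume := by
    intro r hr hrδ
    have hsub : Icc (t - r) (t + r) ⊆ Ico a b := by
      intro w hw
      constructor
      · linarith [hw.1]
      · linarith [hw.2]
    exact ((hgL.mono_set hsub).sub (integrableOn_const (by
      rw [Real.volume_Icc]; exact ENNReal.ofReal_ne_top))).norm
  refine ⟨Ioo (t - δ) (t + δ) ∩ T, inter_mem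
    (mem_nhdsWithin_of_mem_nhds (Ioo_mem_nhds (by linarith) (by linarith)))
    self_mem_nhdsWithin, ?_⟩
  rintro s ⟨⟨hs1, hs2⟩, hsT⟩
  simp only [hrd]
  have hsa : a < s := by linarith
  have hsb : s < b := by linarith
  rcases lt_trichotomy s t with hst | hst | hst
  · -- s < t
    set r : ℝ := t - s with hrdef
    have hr : 0 < r := by simp only [hrdef]; linarith
    have hrδ : r < δ := by simp only [hrdef]; linarith
    have hsplit : (∫ w in Ico a t, g w ∂F.measure)
        = (∫ w in Ico a s, g w ∂F.measure) + ∫ w in Ico s t, g w ∂F.measure := by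
      rw [← Set.Ico_union_Ico_eq_Ico hsa.le hst.le,
        setIntegral_union (Set.Ico_disjoint_Ico_same) measurableSet_Ico
          (hg.mono_set (Ico_subset_Ico le_rfl (by linarith)))
          (hg.mono_set (Ico_subset_Ico hsa.le htb.le))]
    have hdiff : (∫ w in Ico a t, g w ∂F.measure) - (∫ w in Ico a s, g w ∂F.measure)
        - g t * ((t : ℂ) - (s : ℂ))
        = (∫ w in Ico s t, g w ∂F.measure) - ((t : ℂ) - (s : ℂ)) * g t := by
      rw [hsplit]; ring
    rw [hdiff]
    have h1 := key s t hsT htT hsa.le htb.le hst.le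
    have h2 : ∫ w in Ico s t, ‖g w - g t‖ ≤ ∫ w in Icc (t - r) (t + r), ‖g w - g t‖ := by
      apply setIntegral_mono_set (hnormint r hr hrδ)
      · filter_upwards with w using norm_nonneg _
      · apply HasSubset.Subset.eventuallyLE
        intro w hw
        constructor
        · simp only [hrdef]; linarith [hw.1]
        · simp only [hrdef]; linarith [hw.2]
    have habs : |t - s| = r := abs_of_pos hr
    rw [habs]
    linarith [hIbound r hr hrδ]
  · -- s = t
    subst hst
    simp
  · -- t < s
    set r : ℝ := s - t with hrdef
    have hr : 0 < r := by simp only [hrdef]; linarith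
    have hrδ : r < δ := by simp only [hrdef]; linarith
    have hsplit : (∫ w in Ico a s, g w ∂F.measure)
        = (∫ w in Ico a t, g w ∂F.measure) + ∫ w in Ico t s, g w ∂F.measure := by
      rw [← Set.Ico_union_Ico_eq_Ico hta.le hst.le,
        setIntegral_union (Set.Ico_disjoint_Ico_same) measurableSet_Ico
          (hg.mono_set (Ico_subset_Ico le_rfl (by linarith)))
          (hg.mono_set (Ico_subset_Ico hta.le hsb.le))]
    have hdiff : (∫ w in Ico a t, g w ∂F.measure) - (∫ w in Ico a s, g w ∂F.measure)
        - g t * ((t : ℂ) - (s : ℂ))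
        = -((∫ w in Ico t s, g w ∂F.measure) - ((s : ℂ) - (t : ℂ)) * g t) := by
      rw [hsplit]; ring
    rw [hdiff, norm_neg]
    have h1 := key t s htT hsT hta.le hsb.le hst.le
    have h2 : ∫ w in Ico t s, ‖g w - g t‖ ≤ ∫ w in Icc (t - r) (t + r), ‖g w - g t‖ := by
      apply setIntegral_mono_set (hnormint r hr hrδ)
      · filter_upwards with w using norm_nonneg _
      · apply HasSubset.Subset.eventuallyLE
        intro w hw
        constructor
        · simp only [hrdef]; linarith [hw.1]
        · simp only [hrdef]; linarith [hw.2]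
    have habs : |t - s| = r := by
      rw [abs_sub_comm]; exact abs_of_pos hr
    rw [habs]
    linarith [hIbound r hr hrδ]
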